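/- Let I be a nonzero left ideal of a finite Frobenius ring R, r ∈ R with |Ir| = |I|, and s ∈ R. Then Σ_{x∈I} w_hom(x)·w_hom(xr + s) = |I| + |I|·(|R^× ∩ (1+I^⊥)|/|R^×|)·(1 − w_hom(s)). -/
import Mathlib

open scoped Classical

/-- The normalized homogeneous weight defined from an additive character. -/
noncomputable def whom {R : Type} [Ring R] [Fintype R] (χ : AddChar R ℂ) (x : R) : ℂ :=
  1 - (Fintype.card Rˣ : ℂ)⁻¹ * ∑ u : Rˣ, χ ((u : R) * x)

/-- A generating character: a character of `(R,+)` whose kernel contains no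
nonzero left ideal. -/
def IsGenChar {R : Type} [Ring R] [Fintype R] (χ : AddChar R ℂ) : Prop :=
  ∀ I : Ideal R, I ≠ ⊥ → ∃ x ∈ I, χ x ≠ 1

set_option linter.unusedSectionVars false
set_option linter.unusedVariables false
set_option maxHeartbeats 1000000

namespace FrobAux
variable {R : Type} [Ring R] [Fintype R] {χ : AddChar R ℂ}

noncomputable def rmul (t : R) : R →ₗ[R] R := LinearMap.toSpanSingleton R R t

@[simp] lemma rmul_apply (t x : R) : rmul t x = x * t := by
  simp [rmul, LinearMap.toSpanSingleton_apply, smul_eq_mul]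

lemma annihilates (hχ : IsGenChar χ) (J : Ideal R) (t : R)
    (h : ∀ x ∈ J, χ (x * t) = 1) : ∀ x ∈ J, x * t = 0 := by
  have hbot : Submodule.map (rmul t) J = ⊥ := by
    by_contra hne
    obtain ⟨y, hy, hy1⟩ := hχ _ hne
    obtain ⟨x, hx, rfl⟩ := Submodule.mem_map.mp hy
    exact hy1 (by simpa using h x hx)
  intro x hx
  have : rmul t x ∈ Submodule.map (rmul t) J := Submodule.mem_map_of_mem hx
  rw [hbot] at this
  simpa using this


noncomputable def idchar (χ : AddChar R ℂ) (J : Ideal R) (t : R) : AddChar J ℂ :=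
  χ.compAddMonoidHom ((AddMonoidHom.mulRight t).comp (J.subtype.toAddMonoidHom))

@[simp] lemma idchar_apply (J : Ideal R) (t : R) (x : J) :
    idchar χ J t x = χ ((x : R) * t) := rfl

lemma sum_idchar (hχ : IsGenChar χ) (J : Ideal R) (t : R) :
    ∑ x : J, χ ((x : R) * t) =
      if (∀ x ∈ J, x * t = 0) then (Nat.card J : ℂ) else 0 := by
  have h1 : ∑ x : J, χ ((x : R) * t) = ∑ x : J, idchar χ J t x := rfl
  rw [h1, AddChar.sum_eq_ite]
  have h2 : idchar χ J t = 0 ↔ ∀ x ∈ J, x * t = 0 := by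
    rw [AddChar.eq_zero_iff]
    constructor
    · intro h
      exact annihilates hχ J t (fun x hx => h ⟨x, hx⟩)
    · intro h x
      simp [h x x.2]
  by_cases hc : ∀ x ∈ J, x * t = 0
  · rw [if_pos (h2.mpr hc), if_pos hc, Nat.card_eq_fintype_card]
  · rw [if_neg (fun hz => hc (h2.mp hz)), if_neg hc]

noncomputable def mka (χ : AddChar R ℂ) (a : R) : AddChar R ℂ :=
  χ.compAddMonoidHom (AddMonoidHom.mulRight a)

@[simp] lemma mka_apply (a x : R) : mka χ a x = χ (x * a) := rfl

noncomputable def mkb (χ : AddChar R ℂ) (a : R) : AddChar R ℂ :=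
  χ.compAddMonoidHom (AddMonoidHom.mulLeft a)

@[simp] lemma mkb_apply (a x : R) : mkb χ a x = χ (a * x) := rfl

lemma rker (hχ : IsGenChar χ) {b : R} (h : ∀ x, χ (x * b) = 1) : b = 0 := by
  have := annihilates hχ ⊤ b (fun x _ => h x) 1 trivial
  simpa using this

lemma eq_of_chars (hχ : IsGenChar χ) {a b : R} (h : ∀ x, χ (x * a) = χ (x * b)) :
    a = b := by
  have h' : ∀ x, χ (x * (a - b)) = 1 := by
    intro x
    rw [mul_sub, AddChar.map_sub_eq_div, h x, div_self]
    exact (χ.val_isUnit _).ne_zero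
  exact sub_eq_zero.mp (rker hχ h')

lemma mka_injective (hχ : IsGenChar χ) : Function.Injective (mka χ) := by
  intro a b hab
  exact eq_of_chars hχ (fun x => by
    have := congrArg (fun ψ : AddChar R ℂ => ψ x) hab
    simpa using this)

lemma mka_bijective (hχ : IsGenChar χ) : Function.Bijective (mka χ) :=
  (Fintype.bijective_iff_injective_and_card _).mpr
    ⟨mka_injective hχ, (AddChar.card_eq).symm⟩

/-- the "Nakayama-type" map τ with χ (a * x) = χ (x * τ a) -/
noncomputable def tau (hχ : IsGenChar χ) (a : R) : R :=
  ((mka_bijective hχ).surjective (mkb χ a)).choose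

lemma tau_spec (hχ : IsGenChar χ) (a x : R) :
    χ (x * tau hχ a) = χ (a * x) := by
  have h := ((mka_bijective hχ).surjective (mkb χ a)).choose_spec
  have := congrArg (fun ψ : AddChar R ℂ => ψ x) h
  simpa [tau] using this

lemma tau_unique (hχ : IsGenChar χ) {a b : R} (h : ∀ x, χ (x * b) = χ (a * x)) :
    b = tau hχ a :=
  eq_of_chars hχ (fun x => by rw [h x, tau_spec])

lemma tau_add (hχ : IsGenChar χ) (a b : R) :
    tau hχ (a + b) = tau hχ a + tau hχ b := by
  refine (tau_unique hχ (fun x => ?_)).symm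
  rw [mul_add, add_mul, AddChar.map_add_eq_mul, AddChar.map_add_eq_mul,
    tau_spec, tau_spec]

lemma tau_mul (hχ : IsGenChar χ) (a b : R) :
    tau hχ (a * b) = tau hχ a * tau hχ b := by
  refine (tau_unique hχ (fun x => ?_)).symm
  calc χ (x * (tau hχ a * tau hχ b)) = χ ((x * tau hχ a) * tau hχ b) := by rw [mul_assoc]
    _ = χ (b * (x * tau hχ a)) := tau_spec hχ b _
    _ = χ ((b * x) * tau hχ a) := by rw [mul_assoc]
    _ = χ (a * (b * x)) := tau_spec hχ a _
    _ = χ (a * b * x) := by rw [mul_assoc]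

lemma tau_zero (hχ : IsGenChar χ) : tau hχ 0 = 0 := by
  refine (tau_unique hχ (fun x => by simp)).symm

lemma tau_one (hχ : IsGenChar χ) : tau hχ 1 = 1 := by
  refine (tau_unique hχ (fun x => by simp)).symm

lemma tau_injective (hχ : IsGenChar χ) : Function.Injective (tau hχ) := by
  set D : Ideal R :=
    { carrier := {a | tau hχ a = 0}
      add_mem' := fun ha hb => by simp [Set.mem_setOf_eq] at *; rw [tau_add hχ, ha, hb, add_zero]
      zero_mem' := tau_zero hχ
      smul_mem' := fun r a ha => by
        simp [Set.mem_setOf_eq, smul_eq_mul] at *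
        rw [tau_mul hχ, ha, mul_zero] } with hD
  have hDbot : D = ⊥ := by
    by_contra hne
    obtain ⟨y, hy, hy1⟩ := hχ D hne
    apply hy1
    have : tau hχ y = 0 := hy
    have h2 := tau_spec hχ y 1
    rw [this] at h2
    simpa using h2.symm
  intro a b hab
  have : a - b ∈ D := by
    show tau hχ (a - b) = 0
    have h1 : tau hχ (a - b) + tau hχ b = tau hχ a := by rw [← tau_add hχ, sub_add_cancel]
    rw [hab] at h1
    have h2 : tau hχ (a - b) + tau hχ b = 0 + tau hχ b := by rw [h1, zero_add]
    exact add_right_cancel h2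
  rw [hDbot] at this
  exact sub_eq_zero.mp ((Submodule.mem_bot R).mp this)

lemma tau_bijective (hχ : IsGenChar χ) : Function.Bijective (tau hχ) :=
  Finite.injective_iff_bijective.mp (tau_injective hχ)

/-- τ as ring equiv -/
noncomputable def tauEquiv (hχ : IsGenChar χ) : R ≃+* R :=
  RingEquiv.ofBijective
    (({ toFun := tau hχ,
        map_one' := tau_one hχ,
        map_mul' := tau_mul hχ,
        map_zero' := tau_zero hχ,
        map_add' := tau_add hχ } : R →+* R)) (tau_bijective hχ)

@[simp] lemma tauEquiv_apply (hχ : IsGenChar χ) (a : R) : tauEquiv hχ a = tau hχ a := rfl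

/-- τ on units -/
noncomputable def tauUnits (hχ : IsGenChar χ) : Rˣ ≃* Rˣ :=
  Units.mapEquiv (tauEquiv hχ).toMulEquiv

@[simp] lemma tauUnits_coe (hχ : IsGenChar χ) (u : Rˣ) :
    ((tauUnits hχ u : Rˣ) : R) = tau hχ (u : R) := rfl

lemma lker (hχ : IsGenChar χ) {b : R} (h : ∀ x, χ (b * x) = 1) : b = 0 := by
  apply tau_injective hχ
  rw [tau_zero]
  apply rker hχ
  intro x
  rw [tau_spec hχ b x]
  exact h x

/-- cardinality of the right annihilator of a left ideal -/
lemma card_ann_mul (hχ : IsGenChar χ) (J : Ideal R) :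
    Nat.card {t : R // ∀ x ∈ J, x * t = 0} * Nat.card J = Fintype.card R := by
  have key1 : ∑ t : R, ∑ x : J, χ ((x : R) * t)
      = (Nat.card {t : R // ∀ x ∈ J, x * t = 0} : ℂ) * (Nat.card J : ℂ) := by
    calc ∑ t : R, ∑ x : J, χ ((x : R) * t)
        = ∑ t : R, if (∀ x ∈ J, x * t = 0) then (Nat.card J : ℂ) else 0 := by
          exact Finset.sum_congr rfl (fun t _ => sum_idchar hχ J t)
      _ = (Finset.univ.filter (fun t : R => ∀ x ∈ J, x * t = 0)).card • (Nat.card J : ℂ) := by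
          rw [Finset.sum_ite, Finset.sum_const, Finset.sum_const_zero, add_zero]
      _ = (Nat.card {t : R // ∀ x ∈ J, x * t = 0} : ℂ) * (Nat.card J : ℂ) := by
          simp [nsmul_eq_mul, Nat.card_eq_fintype_card, Fintype.card_subtype]
  have key2 : ∑ t : R, ∑ x : J, χ ((x : R) * t) = (Fintype.card R : ℂ) := by
    rw [Finset.sum_comm]
    have inner : ∀ x : J, ∑ t : R, χ ((x : R) * t)
        = if (x : R) = 0 then (Fintype.card R : ℂ) else 0 := by
      intro x
      have h1 : ∑ t : R, χ ((x : R) * t) = ∑ t : R, mkb χ (x : R) t := rfl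
      rw [h1, AddChar.sum_eq_ite]
      congr 1
      · rw [eq_iff_iff]
        constructor
        · intro h
          apply lker hχ
          intro y
          have := congrArg (fun ψ : AddChar R ℂ => ψ y) h
          simpa using this
        · intro h; rw [h]; ext y; simp
    rw [Finset.sum_congr rfl (fun x _ => inner x)]
    have h2 : ∀ x : J, ((x : R) = 0) = (x = (0 : J)) := by
      intro x; rw [eq_iff_iff, ZeroMemClass.coe_eq_zero]
    simp only [h2]
    rw [Finset.sum_ite_eq' Finset.univ (0 : J) (fun _ => (Fintype.card R : ℂ))]
    simp
  have := key1.symm.trans key2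
  exact_mod_cast this

lemma card_sup_eq (I K : Ideal R) (h : I ⊓ K = ⊥) :
    Nat.card (I ⊔ K : Ideal R) = Nat.card I * Nat.card K := by
  let f : (↥I × ↥K) → ↥(I ⊔ K : Ideal R) := fun p =>
    ⟨(p.1 : R) + (p.2 : R), Submodule.add_mem_sup p.1.2 p.2.2⟩
  have hinj : Function.Injective f := by
    rintro ⟨⟨x, hx⟩, ⟨k, hk⟩⟩ ⟨⟨x', hx'⟩, ⟨k', hk'⟩⟩ hfe
    have he : x + k = x' + k' := congrArg Subtype.val hfe
    have hd : x - x' = k' - k := by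
      have h3 : x + k - (x' + k) = x' + k' - (x' + k) := by rw [he]
      calc x - x' = x + k - (x' + k) := by abel
        _ = x' + k' - (x' + k) := h3
        _ = k' - k := by abel
    have hmem : x - x' ∈ I ⊓ K := by
      refine ⟨I.sub_mem hx hx', ?_⟩
      rw [hd]; exact K.sub_mem hk' hk
    rw [h, Submodule.mem_bot] at hmem
    have hx2 : x = x' := sub_eq_zero.mp hmem
    have hk2 : k = k' := by
      have : k' - k = 0 := by rw [← hd, hmem]
      exact (sub_eq_zero.mp this).symm
    simp [hx2, hk2]
  have hsurj : Function.Surjective f := by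
    rintro ⟨z, hz⟩
    obtain ⟨y, hy, w, hw, rfl⟩ := Submodule.mem_sup.mp hz
    exact ⟨⟨⟨y, hy⟩, ⟨w, hw⟩⟩, Subtype.ext rfl⟩
  calc Nat.card (I ⊔ K : Ideal R) = Nat.card (↥I × ↥K) :=
        (Nat.card_congr (Equiv.ofBijective f ⟨hinj, hsurj⟩)).symm
    _ = Nat.card I * Nat.card K := Nat.card_prod _ _

lemma card_hom_le (hχ : IsGenChar χ) (K : Ideal R) :
    Nat.card (↥K →ₗ[R] R) ≤ Nat.card K := by
  have hinj : Function.Injective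
      (fun f : ↥K →ₗ[R] R => χ.compAddMonoidHom f.toAddMonoidHom) := by
    intro f g hfg
    ext x
    have hv : ∀ y : K, χ (f y) = χ (g y) := by
      intro y
      have := congrArg (fun ψ : AddChar ↥K ℂ => ψ y) hfg
      simpa using this
    have hb : ∀ a : R, χ (a * (f x - g x)) = 1 := by
      intro a
      have h1 : χ (a * f x) = χ (a * g x) := by
        have h2 := hv (a • x)
        simpa [map_smul, smul_eq_mul] using h2
      rw [mul_sub, AddChar.map_sub_eq_div, h1, div_self]
      exact (χ.val_isUnit _).ne_zero
    exact sub_eq_zero.mp (rker hχ (fun y => hb y))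
  calc Nat.card (↥K →ₗ[R] R) ≤ Nat.card (AddChar ↥K ℂ) :=
        Nat.card_le_card_of_injective _ hinj
    _ = Nat.card K := by
        rw [Nat.card_eq_fintype_card, AddChar.card_eq, ← Nat.card_eq_fintype_card]

noncomputable def resmul (K : Ideal R) (d : R) : ↥K →ₗ[R] R := (rmul d).comp K.subtype

@[simp] lemma resmul_apply (K : Ideal R) (d : R) (k : ↥K) :
    resmul K d k = (k : R) * d := by
  simp [resmul]

lemma exists_good_ext (hχ : IsGenChar χ) (I K : Ideal R) (hIK : I ⊓ K = ⊥)
    (hKbot : K ≠ ⊥) (hKmin : ∀ K' : Ideal R, K' ≤ K → K' ≠ ⊥ → K' = K)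
    (c : R) (hc : ∀ x ∈ I, x * c = 0 → x = 0) :
    ∃ d : R, (∀ x ∈ I, x * d = x * c) ∧ (∀ z ∈ (I ⊔ K : Ideal R), z * d = 0 → z = 0) := by
  classical
  have hfinH : Finite (↥K →ₗ[R] R) :=
    Finite.of_injective (fun f => (f : ↥K → R)) DFunLike.coe_injective
  set TI := {t : R // ∀ x ∈ I, x * t = 0} with hTI
  set TIK := {t : R // ∀ x ∈ (I ⊔ K : Ideal R), x * t = 0} with hTIK
  set S : Set (↥K →ₗ[R] R) :=
    Set.range (fun t : TI => resmul K (c + (t : R))) with hS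
  set B : Set (↥K →ₗ[R] R) := {g | ∀ k : ↥K, ∃ x ∈ I, x * c = g k} with hB
  -- pick a preimage for each element of S
  have pickex : ∀ s : ↥S, ∃ t : TI, resmul K (c + (t : R)) = s.1 := fun s => s.2
  -- the cardinality of S
  have cardS : Nat.card ↥S = Nat.card K := by
    let F1 : TIK × ↥S → TI := fun p =>
      ⟨((pickex p.2).choose : R) + (p.1 : R), by
        intro x hx
        rw [mul_add, ((pickex p.2).choose).2 x hx,
          p.1.2 x (Submodule.mem_sup_left hx), add_zero]⟩
    have keyS : ∀ (s : ↥S) (k : ↥K),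
        s.1 k = (k : R) * c + (k : R) * ((pickex s).choose : R) := by
      intro s k
      have hspec := congrArg (fun f : ↥K →ₗ[R] R => f k) (pickex s).choose_spec
      simp only [resmul_apply, mul_add] at hspec
      exact hspec.symm
    have hF1inj : Function.Injective F1 := by
      rintro ⟨t0, s⟩ ⟨t0', s'⟩ hfe
      have he : ((pickex s).choose : R) + (t0 : R)
          = ((pickex s').choose : R) + (t0' : R) := congrArg Subtype.val hfe
      have hss : s = s' := by
        apply Subtype.ext; apply LinearMap.ext; intro k
        rw [keyS s k, keyS s' k]
        have h1 : (k : R) * (t0 : R) = 0 := t0.2 _ (Submodule.mem_sup_right k.2)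
        have h2 : (k : R) * (t0' : R) = 0 := t0'.2 _ (Submodule.mem_sup_right k.2)
        have := congrArg (fun w => (k : R) * w) he
        simp only [mul_add, h1, h2, add_zero] at this
        rw [this]
      subst hss
      have ht0 : t0 = t0' := Subtype.ext (by exact add_left_cancel he)
      rw [ht0]
    have hF1surj : Function.Surjective F1 := by
      intro t
      have hmem : resmul K (c + (t : R)) ∈ S := ⟨t, rfl⟩
      set s : ↥S := ⟨resmul K (c + (t : R)), hmem⟩ with hs
      have hkt : ∀ k : ↥K, (k : R) * ((pickex s).choose : R) = (k : R) * (t : R) := by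
        intro k
        have h1 := keyS s k
        have h2 : s.1 k = (k : R) * c + (k : R) * (t : R) := by
          simp [hs, mul_add]
        rw [h2] at h1
        exact (add_left_cancel h1).symm
      refine ⟨⟨⟨(t : R) - ((pickex s).choose : R), ?_⟩, s⟩, ?_⟩
      · intro x hx
        obtain ⟨a, ha, k, hk, rfl⟩ := Submodule.mem_sup.mp hx
        have h3 : a * ((t : R) - ((pickex s).choose : R)) = 0 := by
          rw [mul_sub, t.2 a ha, ((pickex s).choose).2 a ha, sub_zero]
        have h4 : k * ((t : R) - ((pickex s).choose : R)) = 0 := by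
          rw [mul_sub, hkt ⟨k, hk⟩, sub_self]
        rw [add_mul, h3, h4, add_zero]
      · apply Subtype.ext
        show ((pickex s).choose : R) + ((t : R) - ((pickex s).choose : R)) = (t : R)
        abel
    have hcards : Nat.card TI = Nat.card TIK * Nat.card ↥S := by
      rw [← Nat.card_prod]
      exact (Nat.card_congr (Equiv.ofBijective F1 ⟨hF1inj, hF1surj⟩)).symm
    have e1 : Nat.card TI * Nat.card I = Fintype.card R := card_ann_mul hχ I
    have e2 : Nat.card TIK * Nat.card (I ⊔ K : Ideal R) = Fintype.card R :=
      card_ann_mul hχ (I ⊔ K)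
    have e3 : Nat.card (I ⊔ K : Ideal R) = Nat.card I * Nat.card K := card_sup_eq I K hIK
    have hTIKpos : 0 < Nat.card TIK :=
      Nat.card_pos_iff.mpr ⟨⟨⟨0, fun x _ => mul_zero x⟩⟩, Finite.of_injective
        (fun t : TIK => (t : R)) Subtype.val_injective⟩
    have hIpos : 0 < Nat.card I := Nat.card_pos
    have heq : Nat.card TIK * (Nat.card I * Nat.card ↥S)
        = Nat.card TIK * (Nat.card I * Nat.card K) := by
      calc Nat.card TIK * (Nat.card I * Nat.card ↥S)
          = Nat.card TI * Nat.card I := by rw [hcards]; ring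
        _ = Nat.card TIK * Nat.card (I ⊔ K : Ideal R) := by rw [e1, e2]
        _ = Nat.card TIK * (Nat.card I * Nat.card K) := by rw [e3]
    exact Nat.eq_of_mul_eq_mul_left hIpos
      (Nat.eq_of_mul_eq_mul_left hTIKpos heq)
  -- uniqueness of division by c inside I
  have uniqc : ∀ x y : R, x ∈ I → y ∈ I → x * c = y * c → x = y := by
    intro x y hx hy hxy
    have : (x - y) * c = 0 := by rw [sub_mul, hxy, sub_self]
    have := hc _ (I.sub_mem hx hy) this
    exact sub_eq_zero.mp this
  -- the "hat" construction for bad homs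
  have hatdef : ∀ g : ↥B, ∃ h : ↥K →ₗ[R] R,
      ∀ k : ↥K, h k ∈ I ∧ (h k) * c = g.1 k := by
    intro g
    have hch : ∀ k : ↥K, ((g.2 k).choose ∈ I ∧ (g.2 k).choose * c = g.1 k) := by
      intro k
      exact ⟨(g.2 k).choose_spec.1, (g.2 k).choose_spec.2⟩
    refine ⟨{ toFun := fun k => (g.2 k).choose,
              map_add' := ?_, map_smul' := ?_ }, fun k => hch k⟩
    · intro k k'
      apply uniqc _ _ (hch (k + k')).1 (I.add_mem (hch k).1 (hch k').1)
      rw [(hch (k + k')).2, add_mul, (hch k).2, (hch k').2, map_add]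
    · intro a k
      have h2 : (a * (g.2 k).choose) * c = g.1 (a • k) := by
        rw [mul_assoc, (hch k).2, ← smul_eq_mul, ← map_smul]
      apply uniqc _ _ (hch (a • k)).1 (by
        simpa [smul_eq_mul] using I.smul_mem a (hch k).1)
      simp only [RingHom.id_apply, smul_eq_mul]
      rw [(hch (a • k)).2, h2]
  choose hat hhat using hatdef
  -- bound the number of bad homs
  have cardB2 : 2 * Nat.card ↥B ≤ Nat.card K := by
    let F2 : ↥B × (↥K →ₗ[R] ↥K) → (↥K →ₗ[R] R) :=
      fun p => hat p.1 + K.subtype.comp p.2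
    have hF2inj : Function.Injective F2 := by
      rintro ⟨g, e⟩ ⟨g', e'⟩ hfe
      have hpt : ∀ k : ↥K, hat g k + ((e k : R)) = hat g' k + ((e' k : R)) := by
        intro k
        have := congrArg (fun f : ↥K →ₗ[R] R => f k) hfe
        simpa [F2] using this
      have hsep : ∀ k : ↥K, hat g k = hat g' k ∧ (e k : R) = (e' k : R) := by
        intro k
        have hd : hat g k - hat g' k = (e' k : R) - (e k : R) := by
          have := hpt k
          calc hat g k - hat g' k = (hat g k + (e k : R)) - ((e k : R) + hat g' k) := by abel
            _ = (hat g' k + (e' k : R)) - ((e k : R) + hat g' k) := by rw [this]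
            _ = (e' k : R) - (e k : R) := by abel
        have hmem : hat g k - hat g' k ∈ I ⊓ K := by
          refine ⟨I.sub_mem (hhat g k).1 (hhat g' k).1, ?_⟩
          rw [hd]; exact K.sub_mem (e' k).2 (e k).2
        rw [hIK, Submodule.mem_bot] at hmem
        constructor
        · exact sub_eq_zero.mp hmem
        · have : (e' k : R) - (e k : R) = 0 := by rw [← hd, hmem]
          exact (sub_eq_zero.mp this).symm
      have hee : e = e' := by
        apply LinearMap.ext; intro k; exact Subtype.ext (hsep k).2
      have hgg : g = g' := by
        apply Subtype.ext; apply LinearMap.ext; intro k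
        rw [← (hhat g k).2, ← (hhat g' k).2, (hsep k).1]
      rw [hee, hgg]
    have hcard2 : Nat.card ↥B * Nat.card (↥K →ₗ[R] ↥K) ≤ Nat.card (↥K →ₗ[R] R) := by
      rw [← Nat.card_prod]
      exact Nat.card_le_card_of_injective F2 hF2inj
    have hKx : ∃ x ∈ K, x ≠ 0 := by
      rw [← Submodule.ne_bot_iff]; exact hKbot
    obtain ⟨x0, hx0K, hx0⟩ := hKx
    have hfinEnd : Finite (↥K →ₗ[R] ↥K) :=
      Finite.of_injective (fun f => (f : ↥K → ↥K)) DFunLike.coe_injective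
    have hEnd2 : 2 ≤ Nat.card (↥K →ₗ[R] ↥K) := by
      have : Nontrivial (↥K →ₗ[R] ↥K) := by
        refine ⟨0, LinearMap.id, fun h => hx0 ?_⟩
        have := congrArg (fun f : ↥K →ₗ[R] ↥K => (f ⟨x0, hx0K⟩ : R)) h
        simpa using this.symm
      exact Finite.one_lt_card_iff_nontrivial.mpr this
    calc 2 * Nat.card ↥B = Nat.card ↥B * 2 := by ring
      _ ≤ Nat.card ↥B * Nat.card (↥K →ₗ[R] ↥K) :=
          Nat.mul_le_mul_left _ hEnd2
      _ ≤ Nat.card (↥K →ₗ[R] R) := hcard2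
      _ ≤ Nat.card K := card_hom_le hχ K
  -- K is nontrivial
  have hK2 : 2 ≤ Nat.card K := by
    have : Nontrivial ↥K := by
      obtain ⟨x0, hx0K, hx0⟩ := (Submodule.ne_bot_iff K).mp hKbot
      exact ⟨⟨x0, hx0K⟩, 0, fun h => hx0 (by simpa using congrArg Subtype.val h)⟩
    exact Finite.one_lt_card_iff_nontrivial.mpr this
  -- find a good hom
  have hSB : ¬ S ⊆ B := by
    intro hsub
    have h1 : Nat.card ↥S ≤ Nat.card ↥B := by
      rw [Nat.card_coe_set_eq, Nat.card_coe_set_eq]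
      exact Set.ncard_le_ncard hsub (Set.toFinite B)
    omega
  obtain ⟨g0, hg0S, hg0B⟩ := Set.not_subset.mp hSB
  obtain ⟨t, hg0⟩ := hg0S
  refine ⟨c + (t : R), ?_, ?_⟩
  · intro x hx
    rw [mul_add, t.2 x hx, add_zero]
  · -- injectivity on I ⊔ K
    -- the submodule of k ∈ K with g0 k ∈ I*c
    set K1 : Submodule R ↥K :=
      { carrier := {k | ∃ x ∈ I, x * c = g0 k}
        add_mem' := by
          rintro k k' ⟨x, hxI, hx⟩ ⟨y, hyI, hy⟩
          exact ⟨x + y, I.add_mem hxI hyI, by rw [add_mul, hx, hy, map_add]⟩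
        zero_mem' := ⟨0, I.zero_mem, by simp⟩
        smul_mem' := by
          rintro a k ⟨x, hxI, hx⟩
          refine ⟨a * x, by simpa [smul_eq_mul] using I.smul_mem a hxI, ?_⟩
          rw [map_smul, mul_assoc, hx]
          rfl } with hK1
    have hK1netop : K1 ≠ ⊤ := by
      intro h
      apply hg0B
      intro k
      have : k ∈ K1 := h ▸ Submodule.mem_top
      exact this
    have hK1bot : K1 = ⊥ := by
      by_contra hne
      obtain ⟨k0, hk0K1, hk0⟩ := (Submodule.ne_bot_iff K1).mp hne
      have hK' : Submodule.map K.subtype K1 = K := by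
        apply hKmin
        · exact Submodule.map_subtype_le K K1
        · intro h
          apply hk0
          have : (k0 : R) ∈ Submodule.map K.subtype K1 :=
            ⟨k0, hk0K1, rfl⟩
          rw [h, Submodule.mem_bot] at this
          exact Subtype.ext this
      apply hK1netop
      rw [Submodule.eq_top_iff']
      intro k
      have : (k : R) ∈ Submodule.map K.subtype K1 := by rw [hK']; exact k.2
      obtain ⟨k1, hk1, hk1e⟩ := this
      have : k1 = k := Subtype.ext hk1e
      rwa [this] at hk1
    intro z hz hzd
    obtain ⟨a, ha, k, hk, rfl⟩ := Submodule.mem_sup.mp hz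
    have hkd : k * (c + (t : R)) = g0 ⟨k, hk⟩ := by
      rw [← hg0]; simp
    have had : a * (c + (t : R)) = a * c := by
      rw [mul_add, t.2 a ha, add_zero]
    have hsum : a * c + g0 ⟨k, hk⟩ = 0 := by
      rw [← had, ← hkd, ← add_mul]; exact hzd
    have hmemK1 : (-(⟨k, hk⟩ : ↥K)) ∈ K1 := by
      refine ⟨a, ha, ?_⟩
      rw [map_neg]
      have : g0 ⟨k, hk⟩ = -(a * c) := by
        calc g0 ⟨k, hk⟩ = (a * c + g0 ⟨k, hk⟩) - a * c := by abel
          _ = 0 - a * c := by rw [hsum]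
          _ = -(a * c) := by abel
      rw [this]; abel
    rw [hK1bot, Submodule.mem_bot] at hmemK1
    have hkz : k = 0 := by
      have : (⟨k, hk⟩ : ↥K) = 0 := by
        have := congrArg (fun w : ↥K => -w) hmemK1
        simpa using this
      simpa using congrArg Subtype.val this
    have haz : a = 0 := by
      apply hc a ha
      have : a * (c + (t : R)) = 0 := by
        rw [hkz] at hzd
        simpa using hzd
      rwa [had] at this
    rw [hkz, haz, add_zero]

lemma card_mono {K' K : Ideal R} (h : K' ≤ K) : Nat.card K' ≤ Nat.card K :=
  Nat.card_le_card_of_injective (Submodule.inclusion h) (Submodule.inclusion_injective h)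

lemma ideal_eq_of_le_of_card_le {K' K : Ideal R} (h : K' ≤ K)
    (hc : Nat.card K ≤ Nat.card K') : K' = K := by
  have hinj : Function.Injective (Submodule.inclusion h) := Submodule.inclusion_injective h
  have hcard : Fintype.card ↥K' = Fintype.card ↥K := by
    have h1 : Fintype.card ↥K' ≤ Fintype.card ↥K := Fintype.card_le_of_injective _ hinj
    have h2 := hc
    rw [Nat.card_eq_fintype_card, Nat.card_eq_fintype_card] at h2
    omega
  have hsurj : Function.Surjective (Submodule.inclusion h) :=
    ((Fintype.bijective_iff_injective_and_card _).mpr ⟨hinj, hcard⟩).2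
  apply le_antisymm h
  intro x hx
  obtain ⟨⟨y, hy⟩, he⟩ := hsurj ⟨x, hx⟩
  have : y = x := congrArg Subtype.val he
  rwa [← this]

lemma unit_of_inj {c : R} (hc : ∀ x : R, x * c = 0 → x = 0) :
    ∃ u : Rˣ, (u : R) = c := by
  have hinj : Function.Injective (fun x : R => x * c) := by
    intro x y hxy
    dsimp only at hxy
    have : (x - y) * c = 0 := by rw [sub_mul, hxy, sub_self]
    exact sub_eq_zero.mp (hc _ this)
  obtain ⟨b, hb⟩ := Finite.injective_iff_surjective.mp hinj 1
  dsimp only at hb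
  have hcb : c * b = 1 := by
    apply hinj
    show (c * b) * c = 1 * c
    rw [mul_assoc, hb, mul_one, one_mul]
  exact ⟨⟨c, b, hcb, hb⟩, rfl⟩

lemma card_top_eq : Nat.card (⊤ : Ideal R) = Fintype.card R := by
  rw [Nat.card_congr (Submodule.topEquiv (R := R) (M := R)).toEquiv, Nat.card_eq_fintype_card]

lemma ideal_nontrivial {K : Ideal R} (h : K ≠ ⊥) : 2 ≤ Nat.card K := by
  obtain ⟨x0, hx0K, hx0⟩ := (Submodule.ne_bot_iff K).mp h
  have : Nontrivial ↥K :=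
    ⟨⟨x0, hx0K⟩, 0, fun hh => hx0 (by simpa using congrArg Subtype.val hh)⟩
  exact Finite.one_lt_card_iff_nontrivial.mpr this

lemma unit_lift_aux (hχ : IsGenChar χ) : ∀ n : ℕ, ∀ I : Ideal R, ∀ c : R,
    Fintype.card R ≤ n + Nat.card I → (∀ x ∈ I, x * c = 0 → x = 0) →
    ∃ u : Rˣ, ∀ x ∈ I, x * c = x * (u : R) := by
  intro n
  induction n with
  | zero =>
    intro I c hn hc
    have hI : I = ⊤ := by
      apply ideal_eq_of_le_of_card_le le_top
      rw [card_top_eq]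
      omega
    subst hI
    obtain ⟨u, hu⟩ := unit_of_inj (fun x hx => hc x trivial hx)
    exact ⟨u, fun x _ => by rw [hu]⟩
  | succ n ih =>
    intro I c hn hc
    by_cases hess : ∀ Kk : Ideal R, Kk ≠ ⊥ → I ⊓ Kk ≠ ⊥
    · have hZ : ∀ x : R, x * c = 0 → x = 0 := by
        set Z : Ideal R :=
          { carrier := {x | x * c = 0}
            add_mem' := fun {a b} ha hb => by
              simp only [Set.mem_setOf_eq] at *
              rw [add_mul, ha, hb, add_zero]
            zero_mem' := by simp
            smul_mem' := fun r a ha => by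
              simp only [Set.mem_setOf_eq, smul_eq_mul] at *
              rw [mul_assoc, ha, mul_zero] } with hZdef
        have hZbot : Z = ⊥ := by
          by_contra hne
          apply hess Z hne
          apply le_antisymm _ bot_le
          rintro x ⟨hxI, hxZ⟩
          have : x * c = 0 := hxZ
          rw [Submodule.mem_bot]
          exact hc x hxI this
        intro x hx
        have : x ∈ Z := hx
        rw [hZbot, Submodule.mem_bot] at this
        exact this
      obtain ⟨u, hu⟩ := unit_of_inj hZ
      exact ⟨u, fun x _ => by rw [hu]⟩
    · push_neg at hess
      obtain ⟨K0, hK0bot, hK0⟩ := hess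
      have hex : ∃ m : ℕ, ∃ K : Ideal R, (K ≠ ⊥ ∧ I ⊓ K = ⊥) ∧ Nat.card K = m :=
        ⟨_, K0, ⟨hK0bot, hK0⟩, rfl⟩
      obtain ⟨K, ⟨hKbot, hIK⟩, hKcard⟩ := Nat.find_spec hex
      have hKmin : ∀ K' : Ideal R, K' ≤ K → K' ≠ ⊥ → K' = K := by
        intro K' hle hne
        have h1 : Nat.card K' ≤ Nat.card K := card_mono hle
        have h2 : Nat.find hex ≤ Nat.card K' := by
          apply Nat.find_le
          refine ⟨K', ⟨hne, ?_⟩, rfl⟩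
          apply le_antisymm _ bot_le
          calc I ⊓ K' ≤ I ⊓ K := inf_le_inf_left I hle
            _ = ⊥ := hIK
        apply ideal_eq_of_le_of_card_le hle
        omega
      obtain ⟨d, hd1, hd2⟩ := exists_good_ext hχ I K hIK hKbot hKmin c hc
      have hK2 : 2 ≤ Nat.card K := ideal_nontrivial hKbot
      have hcard' : Fintype.card R ≤ n + Nat.card (I ⊔ K : Ideal R) := by
        have hprod := card_sup_eq I K hIK
        have hIpos : 0 < Nat.card I := Nat.card_pos
        have h3 : Nat.card I * 2 ≤ Nat.card I * Nat.card K :=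
          Nat.mul_le_mul_left _ hK2
        omega
      obtain ⟨u, hu⟩ := ih (I ⊔ K) d hcard' hd2
      refine ⟨u, fun x hx => ?_⟩
      rw [← hd1 x hx]
      exact hu x (Submodule.mem_sup_left hx)

lemma unit_lift (hχ : IsGenChar χ) (I : Ideal R) (c : R)
    (hc : ∀ x ∈ I, x * c = 0 → x = 0) :
    ∃ u : Rˣ, ∀ x ∈ I, x * c = x * (u : R) := by
  apply unit_lift_aux hχ (Fintype.card R) I c _ hc
  have : 0 < Nat.card I := Nat.card_pos
  omega

lemma unit_shift_count (hχ : IsGenChar χ) (I : Ideal R) (r : R) (v : Rˣ) :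
    Nat.card {u : Rˣ // ∀ x ∈ I, x * (tau hχ (u : R) + r * tau hχ (v : R)) = 0}
    = Nat.card {w : Rˣ // ∀ x ∈ I, x * ((w : R) + r) = 0} := by
  apply Nat.card_congr
  refine Equiv.subtypeEquiv
    ((tauUnits hχ).toEquiv.trans (Equiv.mulRight ((tauUnits hχ) v)⁻¹)) ?_
  intro u
  have hcoe : ((((tauUnits hχ).toEquiv.trans (Equiv.mulRight ((tauUnits hχ) v)⁻¹)) u : Rˣ) : R)
      = tau hχ (u : R) * ((((tauUnits hχ) v)⁻¹ : Rˣ) : R) := by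
    simp [Units.val_mul]
  set w : Rˣ := ((tauUnits hχ).toEquiv.trans (Equiv.mulRight ((tauUnits hχ) v)⁻¹)) u with hw
  have hkey : ((w : R) + r) * tau hχ (v : R) = tau hχ (u : R) + r * tau hχ (v : R) := by
    rw [hcoe]
    have h1 : ((((tauUnits hχ) v)⁻¹ : Rˣ) : R) * tau hχ (v : R) = 1 := by
      rw [← tauUnits_coe hχ v, Units.inv_mul]
    rw [add_mul, mul_assoc, h1, mul_one]
  constructor
  · intro h x hx
    have h2 : (x * ((w : R) + r)) * tau hχ (v : R) = 0 := by
      rw [mul_assoc, hkey]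
      exact h x hx
    have h3 : ((x * ((w : R) + r)) * tau hχ (v : R)) * ((((tauUnits hχ) v)⁻¹ : Rˣ) : R)
        = x * ((w : R) + r) := by
      rw [← tauUnits_coe hχ v, Units.mul_inv_cancel_right]
    rw [h2, zero_mul] at h3
    exact h3.symm
  · intro h x hx
    rw [← hkey, ← mul_assoc, h x hx, zero_mul]

lemma count_MN (hχ : IsGenChar χ) (I : Ideal R) (r : R) (u0 : Rˣ)
    (hu0 : ∀ x ∈ I, x * (-r) = x * (u0 : R)) :
    Nat.card {u : Rˣ // ∀ a ∈ I, a * ((u : R) - 1) = 0}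
    = Nat.card {w : Rˣ // ∀ a ∈ I, a * ((w : R) + r) = 0} := by
  apply Nat.card_congr
  refine Equiv.subtypeEquiv (Equiv.mulRight u0) ?_
  intro u
  have hcoe : ((Equiv.mulRight u0 u : Rˣ) : R) = (u : R) * (u0 : R) := by
    simp [Units.val_mul]
  constructor
  · intro h a ha
    have hau : a * (u : R) = a := by
      have := h a ha
      rw [mul_sub, mul_one, sub_eq_zero] at this
      exact this
    rw [hcoe, mul_add, ← mul_assoc, hau, ← hu0 a ha, mul_neg, neg_add_cancel]
  · intro h a ha
    have h1 : a * ((u : R) * (u0 : R)) + a * r = 0 := by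
      have := h a ha
      rw [hcoe, mul_add] at this
      exact this
    have h2 : a * (u0 : R) + a * r = 0 := by
      rw [← hu0 a ha, mul_neg, neg_add_cancel]
    have h3 : (a * (u : R)) * (u0 : R) = a * (u0 : R) := by
      have e1 : (a * (u : R)) * (u0 : R) = a * ((u : R) * (u0 : R)) := by rw [mul_assoc]
      have e2 : a * ((u : R) * (u0 : R)) = -(a * r) := by
        calc a * ((u : R) * (u0 : R)) = (a * ((u : R) * (u0 : R)) + a * r) - a * r := by abel
          _ = 0 - a * r := by rw [h1]
          _ = -(a * r) := by abel
      have e3 : a * (u0 : R) = -(a * r) := by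
        calc a * (u0 : R) = (a * (u0 : R) + a * r) - a * r := by abel
          _ = 0 - a * r := by rw [h2]
          _ = -(a * r) := by abel
      rw [e1, e2, e3]
    have h4 : a * (u : R) = a := by
      have := congrArg (fun z => z * ((u0⁻¹ : Rˣ) : R)) h3
      simpa [Units.mul_inv_cancel_right] using this
    rw [mul_sub, mul_one, h4, sub_self]

end FrobAux

/-- If `I` is a nonzero left ideal of a finite Frobenius ring, right
multiplication by `r` is injective on `I`, and `s ∈ R`, then
`Σ_{x∈I} w_hom(x)·w_hom(xr+s)
  = |I| + |I|·(|R^× ∩ (1+I^⊥)|/|R^×|)·(1 − w_hom(s))`. -/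
theorem sum_whom_mul_whom_shift {R : Type} [Ring R] [Fintype R]
    (χ : AddChar R ℂ) (hχ : IsGenChar χ)
    (I : Ideal R) (hI : I ≠ ⊥) (r s : R)
    (hinj : ∀ x ∈ I, ∀ y ∈ I, x * r = y * r → x = y) :
    ∑ x : I, whom χ (x : R) * whom χ ((x : R) * r + s) =
      (Nat.card I : ℂ) +
        (Nat.card I : ℂ) *
          ((Nat.card {u : Rˣ // ∀ a ∈ I, a * ((u : R) - 1) = 0} : ℂ) /
            (Fintype.card Rˣ : ℂ)) * (1 - whom χ s) := by
  classical
  obtain ⟨x0, hx0I, hx0⟩ := (Submodule.ne_bot_iff I).mp hI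
  have hIr : ∀ x ∈ I, x * r = 0 → x = 0 := fun x hx hxr =>
    hinj x hx 0 I.zero_mem (by rw [hxr, zero_mul])
  obtain ⟨u0, hu0⟩ := FrobAux.unit_lift hχ I (-r) (by
    intro x hx hxr
    apply hIr x hx
    rw [mul_neg, neg_eq_zero] at hxr
    exact hxr)
  set M := Nat.card {w : Rˣ // ∀ a ∈ I, a * ((w : R) + r) = 0} with hM
  have hMN : Nat.card {u : Rˣ // ∀ a ∈ I, a * ((u : R) - 1) = 0} = M :=
    FrobAux.count_MN hχ I r u0 hu0
  set n : ℂ := (Fintype.card Rˣ : ℂ) with hn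
  set m : ℂ := (Nat.card I : ℂ) with hm
  set Sg : ℂ := ∑ v : Rˣ, χ ((v : R) * s) with hSg
  -- helpers
  have hne0 : ∀ w : R, IsUnit w → ¬ (∀ x ∈ I, x * w = 0) := by
    intro w hw hall
    apply hx0
    obtain ⟨uw, rfl⟩ := hw
    calc x0 = (x0 * (uw : R)) * ((uw⁻¹ : Rˣ) : R) := by rw [Units.mul_inv_cancel_right]
      _ = 0 := by rw [hall x0 hx0I, zero_mul]
  have sumU : ∀ w : R, IsUnit w → (∑ x : I, χ ((x : R) * w)) = 0 := by
    intro w hw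
    rw [FrobAux.sum_idchar hχ I w, if_neg (hne0 w hw)]
  have hner : ∀ w : R, IsUnit w → ¬ (∀ x ∈ I, x * (r * w) = 0) := by
    intro w hw hall
    apply hx0
    apply hIr x0 hx0I
    obtain ⟨uw, rfl⟩ := hw
    have h1 : (x0 * r) * (uw : R) = 0 := by rw [mul_assoc]; exact hall x0 hx0I
    calc x0 * r = ((x0 * r) * (uw : R)) * ((uw⁻¹ : Rˣ) : R) := by
          rw [Units.mul_inv_cancel_right]
      _ = 0 := by rw [h1, zero_mul]
  -- the three sums
  have hwhom : ∀ x : I, whom χ (x : R) * whom χ ((x : R) * r + s)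
      = 1 - n⁻¹ * (∑ u : Rˣ, χ ((u : R) * (x : R)))
          - n⁻¹ * (∑ v : Rˣ, χ ((v : R) * ((x : R) * r + s)))
          + n⁻¹ * n⁻¹ * ((∑ u : Rˣ, χ ((u : R) * (x : R)))
            * (∑ v : Rˣ, χ ((v : R) * ((x : R) * r + s)))) := by
    intro x
    simp only [whom]
    ring
  have hSA : ∑ x : I, ∑ u : Rˣ, χ ((u : R) * (x : R)) = 0 := by
    rw [Finset.sum_comm]
    apply Finset.sum_eq_zero
    intro u _
    have h1 : ∀ x : I, χ ((u : R) * (x : R)) = χ ((x : R) * FrobAux.tau hχ (u : R)) :=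
      fun x => (FrobAux.tau_spec hχ _ _).symm
    rw [Finset.sum_congr rfl (fun x _ => h1 x)]
    exact sumU (FrobAux.tau hχ (u : R)) ⟨FrobAux.tauUnits hχ u, rfl⟩
  have hSB : ∑ x : I, ∑ v : Rˣ, χ ((v : R) * ((x : R) * r + s)) = 0 := by
    rw [Finset.sum_comm]
    apply Finset.sum_eq_zero
    intro v _
    have h1 : ∀ x : I, χ ((v : R) * ((x : R) * r + s))
        = χ ((x : R) * (r * FrobAux.tau hχ (v : R))) * χ ((v : R) * s) := by
      intro x
      rw [mul_add, AddChar.map_add_eq_mul]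
      congr 1
      rw [← FrobAux.tau_spec hχ (v : R) ((x : R) * r), mul_assoc]
    rw [Finset.sum_congr rfl (fun x _ => h1 x), ← Finset.sum_mul,
      FrobAux.sum_idchar hχ I (r * FrobAux.tau hχ (v : R)),
      if_neg (hner (FrobAux.tau hχ (v : R)) ⟨FrobAux.tauUnits hχ v, rfl⟩), zero_mul]
  have hSAB : ∑ x : I, (∑ u : Rˣ, χ ((u : R) * (x : R)))
      * (∑ v : Rˣ, χ ((v : R) * ((x : R) * r + s))) = (M : ℂ) * m * Sg := by
    have h1 : ∀ x : I, (∑ u : Rˣ, χ ((u : R) * (x : R)))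
        * (∑ v : Rˣ, χ ((v : R) * ((x : R) * r + s)))
        = ∑ u : Rˣ, ∑ v : Rˣ,
            χ ((x : R) * (FrobAux.tau hχ (u : R) + r * FrobAux.tau hχ (v : R)))
              * χ ((v : R) * s) := by
      intro x
      rw [Finset.sum_mul_sum]
      refine Finset.sum_congr rfl (fun u _ => Finset.sum_congr rfl (fun v _ => ?_))
      rw [← FrobAux.tau_spec hχ (u : R) (x : R), mul_add ((v : R)),
        AddChar.map_add_eq_mul, ← FrobAux.tau_spec hχ (v : R) ((x : R) * r),
        mul_assoc (x : R) r, ← mul_assoc (χ ((x : R) * FrobAux.tau hχ (u : R))),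
        ← AddChar.map_add_eq_mul, ← mul_add]
    rw [Finset.sum_congr rfl (fun x _ => h1 x)]
    rw [Finset.sum_comm]
    have h2 : ∀ u : Rˣ, (∑ x : I, ∑ v : Rˣ,
        χ ((x : R) * (FrobAux.tau hχ (u : R) + r * FrobAux.tau hχ (v : R)))
          * χ ((v : R) * s))
        = ∑ v : Rˣ, (if (∀ x ∈ I, x * (FrobAux.tau hχ (u : R)
            + r * FrobAux.tau hχ (v : R)) = 0) then m else 0) * χ ((v : R) * s) := by
      intro u
      rw [Finset.sum_comm]
      refine Finset.sum_congr rfl (fun v _ => ?_)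
      rw [← Finset.sum_mul, FrobAux.sum_idchar hχ I]
    rw [Finset.sum_congr rfl (fun u _ => h2 u)]
    rw [Finset.sum_comm]
    have h3 : ∀ v : Rˣ, (∑ u : Rˣ, (if (∀ x ∈ I, x * (FrobAux.tau hχ (u : R)
        + r * FrobAux.tau hχ (v : R)) = 0) then m else 0) * χ ((v : R) * s))
        = ((M : ℂ) * m) * χ ((v : R) * s) := by
      intro v
      rw [← Finset.sum_mul]
      congr 1
      rw [Finset.sum_ite, Finset.sum_const, Finset.sum_const_zero, add_zero, nsmul_eq_mul]
      congr 1
      have h4 : (Finset.univ.filter (fun u : Rˣ => ∀ x ∈ I, x * (FrobAux.tau hχ (u : R)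
          + r * FrobAux.tau hχ (v : R)) = 0)).card
          = Fintype.card {u : Rˣ // ∀ x ∈ I, x * (FrobAux.tau hχ (u : R)
            + r * FrobAux.tau hχ (v : R)) = 0} := (Fintype.card_subtype _).symm
      rw [h4, ← Nat.card_eq_fintype_card, FrobAux.unit_shift_count hχ I r v, ← hM]
    rw [Finset.sum_congr rfl (fun v _ => h3 v), ← Finset.mul_sum]
  -- assemble
  have hws : 1 - whom χ s = n⁻¹ * Sg := by
    simp only [whom, hSg, hn]
    ring
  calc ∑ x : I, whom χ (x : R) * whom χ ((x : R) * r + s)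
      = ∑ x : I, (1 - n⁻¹ * (∑ u : Rˣ, χ ((u : R) * (x : R)))
          - n⁻¹ * (∑ v : Rˣ, χ ((v : R) * ((x : R) * r + s)))
          + n⁻¹ * n⁻¹ * ((∑ u : Rˣ, χ ((u : R) * (x : R)))
            * (∑ v : Rˣ, χ ((v : R) * ((x : R) * r + s))))) :=
        Finset.sum_congr rfl (fun x _ => hwhom x)
    _ = m - n⁻¹ * (∑ x : I, ∑ u : Rˣ, χ ((u : R) * (x : R)))
          - n⁻¹ * (∑ x : I, ∑ v : Rˣ, χ ((v : R) * ((x : R) * r + s)))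
          + n⁻¹ * n⁻¹ * (∑ x : I, (∑ u : Rˣ, χ ((u : R) * (x : R)))
            * (∑ v : Rˣ, χ ((v : R) * ((x : R) * r + s)))) := by
        rw [Finset.sum_add_distrib, Finset.sum_sub_distrib, Finset.sum_sub_distrib,
          Finset.sum_const, ← Finset.mul_sum, ← Finset.mul_sum, ← Finset.mul_sum]
        simp [Finset.card_univ, hm, Nat.card_eq_fintype_card]
    _ = m + n⁻¹ * n⁻¹ * ((M : ℂ) * m * Sg) := by
        rw [hSA, hSB, hSAB]
        ring
    _ = m + m * ((Nat.card {u : Rˣ // ∀ a ∈ I, a * ((u : R) - 1) = 0} : ℂ) / n)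
          * (1 - whom χ s) := by
        rw [hws, hMN]
        ring
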